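/- arXiv:1412.3177 — 2 statements merged into one kernel-verified Lean document; each statement's English description precedes it below -/
import Mathlib

section
/- Let V be a real inner product space with orthogonal projection pr_H onto a subspace H. Let v, α, β ∈ V with ⟨α,β⟩ = 0, ⟨v,α⟩ ≠ 0, ⟨v,β⟩ ≠ 0. Suppose the four vectors pr_H(v), pr_H(v) − (2⟨v,α⟩/⟨α,α⟩) pr_H(α), pr_H(v) − (2⟨v,β⟩/⟨β,β⟩) pr_H(β), and pr_H(v) − (2⟨v,α⟩/⟨α,α⟩) pr_H(α) − (2⟨v,β⟩/⟨β,β⟩) pr_H(β) all have the same norm. Then ⟨pr_H(α), pr_H(β)⟩ = 0. -/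
open scoped RealInnerProductSpace

lemma aux_sq {V : Type*} [NormedAddCommGroup V] [InnerProductSpace ℝ V]
    (x y : V) (h : ‖x - y‖ = ‖x‖) : ‖y‖ ^ 2 = 2 * ⟪x, y⟫ := by
  have := congrArg (· ^ 2) h
  simp only [@norm_sub_sq_real] at this
  nlinarith [this]

/-- If the projections of `v` and of its reflections in the
hyperplanes orthogonal to `α`, to `β`, and to both, all have the same norm,
then `⟪pr_H α, pr_H β⟫ = 0`. -/
theorem stmt1 {V : Type*} [NormedAddCommGroup V] [InnerProductSpace ℝ V]
    [FiniteDimensional ℝ V] (H : Submodule ℝ V) (v α β : V)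
    (hab : ⟪α, β⟫ = 0) (hva : ⟪v, α⟫ ≠ 0) (hvb : ⟪v, β⟫ ≠ 0)
    (h2 : ‖((Submodule.orthogonalProjectionOnto H v : V) -
        (2 * ⟪v, α⟫ / ⟪α, α⟫) • (Submodule.orthogonalProjectionOnto H α : V))‖ =
      ‖(Submodule.orthogonalProjectionOnto H v : V)‖)
    (h3 : ‖((Submodule.orthogonalProjectionOnto H v : V) -
        (2 * ⟪v, β⟫ / ⟪β, β⟫) • (Submodule.orthogonalProjectionOnto H β : V))‖ =
      ‖(Submodule.orthogonalProjectionOnto H v : V)‖)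
    (h4 : ‖((Submodule.orthogonalProjectionOnto H v : V) -
        (2 * ⟪v, α⟫ / ⟪α, α⟫) • (Submodule.orthogonalProjectionOnto H α : V) -
        (2 * ⟪v, β⟫ / ⟪β, β⟫) • (Submodule.orthogonalProjectionOnto H β : V))‖ =
      ‖(Submodule.orthogonalProjectionOnto H v : V)‖) :
    ⟪(Submodule.orthogonalProjectionOnto H α : V), (Submodule.orthogonalProjectionOnto H β : V)⟫ = 0 := by
  set p : V := (Submodule.orthogonalProjectionOnto H v : V)
  set ca : ℝ := 2 * ⟪v, α⟫ / ⟪α, α⟫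
  set cb : ℝ := 2 * ⟪v, β⟫ / ⟪β, β⟫
  set a : V := ca • (Submodule.orthogonalProjectionOnto H α : V) with ha
  set b : V := cb • (Submodule.orthogonalProjectionOnto H β : V) with hb
  have hα0 : α ≠ 0 := fun h => hva (by simp [h])
  have hβ0 : β ≠ 0 := fun h => hvb (by simp [h])
  have hca : ca ≠ 0 := by
    have : ⟪α, α⟫ ≠ 0 := fun h => hα0 (inner_self_eq_zero.mp h)
    simp [ca, div_eq_zero_iff, this, hva, hα0]
  have hcb : cb ≠ 0 := by
    have : ⟪β, β⟫ ≠ 0 := fun h => hβ0 (inner_self_eq_zero.mp h)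
    simp [cb, div_eq_zero_iff, this, hvb, hβ0]
  have e2 := aux_sq p a h2
  have e3 := aux_sq p b h3
  have e4 : ‖a + b‖ ^ 2 = 2 * ⟪p, a + b⟫ := by
    apply aux_sq
    rw [← sub_sub]
    exact h4
  rw [norm_add_sq_real, inner_add_right] at e4
  have hab0 : ⟪a, b⟫ = 0 := by nlinarith [e2, e3, e4]
  rw [ha, hb, real_inner_smul_left, real_inner_smul_right] at hab0
  have := mul_eq_zero.mp hab0
  rcases this with h | h
  · exact absurd h hca
  · rcases mul_eq_zero.mp h with h' | h'
    · exact absurd h' hcb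
    · exact h'
end

section
/- Let α', β' be roots of a reduced crystallographic root system with α'+β' and α'−β' both roots and α' ≠ ±β'. Then either (i) the system contains a G₂ subsystem and α', β' are short roots at angle π/3 or 2π/3, or (ii) ⟨α',β'⟩ = 0, α' and β' are short, and α'±β' are long roots. -/
open scoped RealInnerProductSpace

private lemma noRatio (p q k : ℤ) (c : ℝ) (hc : 0 < c) (hpq : ¬ (q ∣ p))
    (h : (p : ℝ) * c = (k : ℝ) * ((q : ℝ) * c)) : False := by
  have h2 : (p : ℝ) * c = ((k * q : ℤ) : ℝ) * c := by push_cast; linear_combination h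
  have h3 : (p : ℝ) = ((k * q : ℤ) : ℝ) := mul_right_cancel₀ hc.ne' h2
  have h4 : p = k * q := by exact_mod_cast h3
  exact hpq ⟨k, by rw [h4, mul_comm]⟩

/-- In a reduced crystallographic root system `Δ`, if `α, β,
α + β, α - β` are all roots and `α` is not a multiple of `β`, then either
(i) `α` and `β` are equal-length (short) roots at angle `π/3` or `2π/3`
(so `cos` of the angle is `±1/2`) and `Δ` contains a root of squared length
`3‖α‖²` — the G₂ configuration — or (ii) `⟪α, β⟫ = 0`, `‖α‖ = ‖β‖`, and
`α ± β` are long roots with `‖α ± β‖² = 2‖α‖²` — the B₂ = C₂ configuration. -/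
theorem stmt15 {V : Type*} [NormedAddCommGroup V] [InnerProductSpace ℝ V]
    (Δ : Set V) (hfin : Δ.Finite) (h0 : (0 : V) ∉ Δ)
    (hneg : ∀ γ ∈ Δ, -γ ∈ Δ)
    (hrefl : ∀ γ ∈ Δ, ∀ δ ∈ Δ, δ - (2 * ⟪δ, γ⟫ / ⟪γ, γ⟫) • γ ∈ Δ)
    (hcrys : ∀ γ ∈ Δ, ∀ δ ∈ Δ, ∃ m : ℤ, 2 * ⟪γ, δ⟫ = (m : ℝ) * ⟪δ, δ⟫)
    (hred : ∀ γ ∈ Δ, ∀ c : ℝ, c • γ ∈ Δ → c = 1 ∨ c = -1)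
    (α β : V) (hα : α ∈ Δ) (hβ : β ∈ Δ) (hind : ∀ c : ℝ, α ≠ c • β)
    (hsum : α + β ∈ Δ) (hdiff : α - β ∈ Δ) :
    (‖α‖ = ‖β‖ ∧ (2 * ⟪α, β⟫ = ‖α‖ ^ 2 ∨ 2 * ⟪α, β⟫ = -‖α‖ ^ 2) ∧
        ∃ γ ∈ Δ, ‖γ‖ ^ 2 = 3 * ‖α‖ ^ 2) ∨
    (⟪α, β⟫ = 0 ∧ ‖α‖ = ‖β‖ ∧
        ‖α + β‖ ^ 2 = 2 * ‖α‖ ^ 2 ∧ ‖α - β‖ ^ 2 = 2 * ‖α‖ ^ 2) := by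
  have hα0 : α ≠ 0 := fun h => h0 (h ▸ hα)
  have hβ0 : β ≠ 0 := fun h => h0 (h ▸ hβ)
  set a : ℝ := ⟪α, α⟫ with ha_def
  set b : ℝ := ⟪β, β⟫ with hb_def
  set t : ℝ := ⟪α, β⟫ with ht_def
  have ha : 0 < a := by
    rw [ha_def, real_inner_self_eq_norm_sq]
    exact pow_pos (norm_pos_iff.2 hα0) 2
  have hb : 0 < b := by
    rw [hb_def, real_inner_self_eq_norm_sq]
    exact pow_pos (norm_pos_iff.2 hβ0) 2
  have hna : ‖α‖ ^ 2 = a := (real_inner_self_eq_norm_sq α).symm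
  have hnb : ‖β‖ ^ 2 = b := (real_inner_self_eq_norm_sq β).symm
  have hnormeq : a = b → ‖α‖ = ‖β‖ := by
    intro h
    have h2 : ‖α‖ ^ 2 = ‖β‖ ^ 2 := by rw [hna, hnb, h]
    exact (pow_left_inj₀ (norm_nonneg α) (norm_nonneg β) two_ne_zero).1 h2
  -- strict Cauchy-Schwarz
  have hcs : t ^ 2 < a * b := by
    have hle : |t| ≤ ‖α‖ * ‖β‖ := abs_real_inner_le_norm α β
    have hne : |t| ≠ ‖α‖ * ‖β‖ := by
      intro h
      have hpos : (0:ℝ) < ‖β‖ * ‖α‖ :=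
        mul_pos (norm_pos_iff.2 hβ0) (norm_pos_iff.2 hα0)
      have hc : (⟪β, α⟫ : ℝ) = t := by rw [real_inner_comm α β]
      have h1 : |⟪β, α⟫ / (‖β‖ * ‖α‖)| = 1 := by
        rw [hc, abs_div, abs_of_pos hpos, h, mul_comm ‖α‖ ‖β‖, div_self hpos.ne']
      obtain ⟨-, r, -, hr⟩ := (abs_real_inner_div_norm_mul_norm_eq_one_iff β α).1 h1
      exact hind r hr
    have hlt : |t| < ‖α‖ * ‖β‖ := lt_of_le_of_ne hle hne
    calc t ^ 2 = |t| ^ 2 := (sq_abs t).symm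
      _ < (‖α‖ * ‖β‖) ^ 2 := by nlinarith [abs_nonneg t, norm_nonneg α, norm_nonneg β]
      _ = a * b := by rw [mul_pow, hna, hnb]
  obtain ⟨m, hm⟩ := hcrys α hα β hβ
  obtain ⟨n, hn⟩ := hcrys β hβ α hα
  rw [← ht_def, ← hb_def] at hm
  rw [real_inner_comm α β, ← ht_def, ← ha_def] at hn
  have hsum2 : ⟪α + β, α + β⟫ = a + b + 2 * t := by
    simp only [inner_add_left, inner_add_right, real_inner_comm α β, ← ha_def, ← hb_def,
      ← ht_def]
    ring
  have hdiff2 : ⟪α - β, α - β⟫ = a + b - 2 * t := by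
    simp only [inner_sub_left, inner_sub_right, real_inner_comm α β, ← ha_def, ← hb_def,
      ← ht_def]
    ring
  have hmn4 : (m : ℝ) * n * (a * b) = 4 * t ^ 2 := by linear_combination (-(n:ℝ)*a) * hm - (2*t) * hn
  have hmn_nonneg : 0 ≤ m * n := by
    by_contra h
    push_neg at h
    have h2 : ((m * n : ℤ) : ℝ) < 0 := by exact_mod_cast h
    push_cast at h2
    nlinarith [sq_nonneg t]
  have hmn_lt : m * n < 4 := by
    by_contra h
    push_neg at h
    have h2 : (4 : ℝ) ≤ ((m * n : ℤ) : ℝ) := by exact_mod_cast h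
    push_cast at h2
    nlinarith
  have hcases : m * n = 0 ∨ m * n = 1 ∨ m * n = 2 ∨ m * n = 3 := by omega
  rcases hcases with h | h | h | h
  · -- orthogonal case
    have hmn0 : (m : ℝ) * n = 0 := by exact_mod_cast congrArg (Int.cast : ℤ → ℝ) h
    have ht0 : t = 0 := by nlinarith
    right
    obtain ⟨k, hk⟩ := hcrys α hα (α + β) hsum
    rw [hsum2] at hk
    simp only [inner_add_right, ← ha_def, ← ht_def] at hk
    rw [ht0] at hk
    have hab : a = b := by
      have hk1 : k = 1 := by
        rcases lt_trichotomy k 1 with h1 | h1 | h1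
        · exfalso
          have h2 : (k : ℝ) ≤ 0 := by exact_mod_cast Int.lt_add_one_iff.1 h1
          nlinarith
        · exact h1
        · exfalso
          have h2 : (2 : ℝ) ≤ (k : ℝ) := by exact_mod_cast h1
          nlinarith
      rw [hk1] at hk
      push_cast at hk
      linarith
    refine ⟨ht0, hnormeq hab, ?_, ?_⟩
    · rw [← real_inner_self_eq_norm_sq, hsum2, hna, ht0, ← hab]; ring
    · rw [← real_inner_self_eq_norm_sq, hdiff2, hna, ht0, ← hab]; ring
  · -- G2 case
    left
    rcases Int.eq_one_or_neg_one_of_mul_eq_one' h with ⟨hm1, hn1⟩ | ⟨hm1, hn1⟩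
    · subst hm1; subst hn1
      push_cast at hm hn
      have hab : a = b := by linarith
      refine ⟨hnormeq hab, Or.inl (by rw [hna]; linarith), α + β, hsum, ?_⟩
      rw [← real_inner_self_eq_norm_sq, hsum2, hna]
      linarith
    · subst hm1; subst hn1
      push_cast at hm hn
      have hab : a = b := by linarith
      refine ⟨hnormeq hab, Or.inr (by rw [hna]; linarith), α - β, hdiff, ?_⟩
      rw [← real_inner_self_eq_norm_sq, hdiff2, hna]
      linarith
  · -- m*n = 2, contradiction
    exfalso
    have hd : m ∣ 2 := ⟨n, h.symm⟩
    have hbd1 : m ≤ 2 := Int.le_of_dvd two_pos hd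
    have hbd2 : -2 ≤ m := by
      have := Int.le_of_dvd two_pos ((neg_dvd).2 hd)
      omega
    interval_cases m
    · -- m = -2, n = -1
      have hn1 : n = -1 := by omega
      subst hn1
      push_cast at hm hn
      have e1 : a = 2 * b := by linarith
      have e2 : t = -b := by linarith
      obtain ⟨k, hk⟩ := hcrys β hβ (α - β) hdiff
      rw [hdiff2] at hk
      simp only [inner_sub_right, real_inner_comm α β, ← ht_def, ← hb_def] at hk
      exact noRatio (-4) 5 k b hb (by decide)
        (by push_cast; linear_combination hk + (k:ℝ) * e1 + (-2 - 2*(k:ℝ)) * e2)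
    · -- m = -1, n = -2
      have hn1 : n = -2 := by omega
      subst hn1
      push_cast at hm hn
      have e1 : b = 2 * a := by linarith
      have e2 : t = -a := by linarith
      obtain ⟨k, hk⟩ := hcrys α hα (α - β) hdiff
      rw [hdiff2] at hk
      simp only [inner_sub_right, ← ht_def, ← ha_def] at hk
      exact noRatio 4 5 k a ha (by decide)
        (by push_cast; linear_combination hk + (k:ℝ) * e1 + (2 - 2*(k:ℝ)) * e2)
    · simp at h
    · -- m = 1, n = 2
      have hn1 : n = 2 := by omega
      subst hn1
      push_cast at hm hn
      have e1 : b = 2 * a := by linarith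
      have e2 : t = a := by linarith
      obtain ⟨k, hk⟩ := hcrys α hα (α + β) hsum
      rw [hsum2] at hk
      simp only [inner_add_right, ← ht_def, ← ha_def] at hk
      exact noRatio 4 5 k a ha (by decide)
        (by push_cast; linear_combination hk + (k:ℝ) * e1 + (2*(k:ℝ) - 2) * e2)
    · -- m = 2, n = 1
      have hn1 : n = 1 := by omega
      subst hn1
      push_cast at hm hn
      have e1 : a = 2 * b := by linarith
      have e2 : t = b := by linarith
      obtain ⟨k, hk⟩ := hcrys β hβ (α + β) hsum
      rw [hsum2] at hk
      simp only [inner_add_right, real_inner_comm α β, ← ht_def, ← hb_def] at hk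
      exact noRatio 4 5 k b hb (by decide)
        (by push_cast; linear_combination hk + (k:ℝ) * e1 + (2*(k:ℝ) - 2) * e2)
  · -- m*n = 3, contradiction
    exfalso
    have hd : m ∣ 3 := ⟨n, h.symm⟩
    have hbd1 : m ≤ 3 := Int.le_of_dvd three_pos hd
    have hbd2 : -3 ≤ m := by
      have := Int.le_of_dvd three_pos ((neg_dvd).2 hd)
      omega
    interval_cases m
    · -- m = -3, n = -1
      have hn1 : n = -1 := by omega
      subst hn1
      push_cast at hm hn
      have e1 : a = 3 * b := by linarith
      obtain ⟨k, hk⟩ := hcrys β hβ (α - β) hdiff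
      rw [hdiff2] at hk
      simp only [inner_sub_right, real_inner_comm α β, ← ht_def, ← hb_def] at hk
      exact noRatio (-5) 7 k b hb (by decide)
        (by push_cast; linear_combination hk + (k:ℝ) * e1 + (-1 - (k:ℝ)) * hm)
    · -- m = -2
      omega
    · -- m = -1, n = -3
      have hn1 : n = -3 := by omega
      subst hn1
      push_cast at hm hn
      have e1 : b = 3 * a := by linarith
      obtain ⟨k, hk⟩ := hcrys α hα (α - β) hdiff
      rw [hdiff2] at hk
      simp only [inner_sub_right, ← ht_def, ← ha_def] at hk
      exact noRatio 5 7 k a ha (by decide)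
        (by push_cast; linear_combination hk + (k:ℝ) * e1 + (1 - (k:ℝ)) * hn)
    · simp at h
    · -- m = 1, n = 3
      have hn1 : n = 3 := by omega
      subst hn1
      push_cast at hm hn
      have e1 : b = 3 * a := by linarith
      obtain ⟨k, hk⟩ := hcrys α hα (α + β) hsum
      rw [hsum2] at hk
      simp only [inner_add_right, ← ht_def, ← ha_def] at hk
      exact noRatio 5 7 k a ha (by decide)
        (by push_cast; linear_combination hk + (k:ℝ) * e1 + ((k:ℝ) - 1) * hn)
    · -- m = 2
      omega
    · -- m = 3, n = 1
      have hn1 : n = 1 := by omega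
      subst hn1
      push_cast at hm hn
      have e1 : a = 3 * b := by linarith
      obtain ⟨k, hk⟩ := hcrys β hβ (α + β) hsum
      rw [hsum2] at hk
      simp only [inner_add_right, real_inner_comm α β, ← ht_def, ← hb_def] at hk
      exact noRatio 5 7 k b hb (by decide)
        (by push_cast; linear_combination hk + (k:ℝ) * e1 + ((k:ℝ) - 1) * hm)
end
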